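/- Let H be a complex separable Hilbert space, T a bounded operator on H, and (v_i)_{i∈I} a family in H such that {Tⁿ v_i : i ∈ I, n ≥ 0} is a Parseval frame of H. Then there is a linear isometric equivalence (unitary isomorphism) between the closed linear span of {v_i : i ∈ I} and the closure of the range of I − T T*. In particular, the Hilbert dimension of the closed linear span of the generators of any Parseval frame of iterations by T equals the Parseval frame index γ_p(T). -/

import Mathlib

open scoped ComplexInnerProductSpace

/-- Cauchy–Schwarz-type argument: if `A` is a positive operator and `⟪A x, x⟫` has zero
real part, then `A x = 0`. -/
lemma aux_isPositive_apply_eq_zero {E : Type*} [NormedAddCommGroup E]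
    [InnerProductSpace ℂ E] [CompleteSpace E]
    {A : E →L[ℂ] E} (hA : A.IsPositive) {x : E} (h0 : RCLike.re ⟪A x, x⟫ = 0) :
    A x = 0 := by
  have hself : ContinuousLinearMap.adjoint A = A :=
    ContinuousLinearMap.isSelfAdjoint_iff'.mp hA.isSelfAdjoint
  have hAAx : ⟪A (A x), x⟫ = ⟪A x, A x⟫ := by
    have h := ContinuousLinearMap.adjoint_inner_left A x (A x)
    rwa [hself] at h
  set a : ℝ := ‖A x‖ ^ 2 with ha_def
  set C : ℝ := RCLike.re ⟪A (A x), A x⟫ with hC_def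
  have key : ∀ t : ℝ, 0 ≤ C * (t * t) + (2 * a) * t + 0 := by
    intro t
    have hexp : (⟪A (x + (t : ℂ) • A x), x + (t : ℂ) • A x⟫ : ℂ).re
        = C * (t * t) + (2 * a) * t + 0 := by
      have e1 : (⟪A (x + (t : ℂ) • A x), x + (t : ℂ) • A x⟫ : ℂ)
          = ⟪A x, x⟫ + (t : ℂ) * ⟪A x, A x⟫ + ((t : ℂ) * ⟪A x, A x⟫
            + (t : ℂ) * (t : ℂ) * ⟪A (A x), A x⟫) := by
        rw [map_add, map_smul]
        simp only [inner_add_left, inner_add_right, inner_smul_left, inner_smul_right,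
          Complex.conj_ofReal, hAAx]
        ring
      rw [e1]
      simp only [Complex.add_re, Complex.mul_re, Complex.mul_im, Complex.ofReal_re,
        Complex.ofReal_im]
      have h0' : (⟪A x, x⟫ : ℂ).re = 0 := h0
      have h1' : (⟪A x, A x⟫ : ℂ).re = a := by rw [ha_def]; exact inner_self_eq_norm_sq (𝕜 := ℂ) (A x)
      have him : (⟪A x, A x⟫ : ℂ).im = 0 := inner_self_im (𝕜 := ℂ) (A x)
      have hC' : (⟪A (A x), A x⟫ : ℂ).re = C := rfl
      rw [h0', h1', him, hC']
      ring
    have h : 0 ≤ (⟪A (x + (t : ℂ) • A x), x + (t : ℂ) • A x⟫ : ℂ).re :=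
      hA.re_inner_nonneg_left (x + (t : ℂ) • A x)
    rw [hexp] at h
    exact h
  have hd := discrim_le_zero key
  rw [discrim] at hd
  have ha0 : 0 ≤ a := by positivity
  have : a = 0 := by nlinarith
  have : ‖A x‖ = 0 := by
    have := this
    rw [ha_def] at this
    nlinarith [norm_nonneg (A x)]
  simpa using this

/-- If `{Tⁿ vᵢ}` is a Parseval frame of iterations of `H`, then the
closed linear span of the generators `{vᵢ}` is unitarily isomorphic (via a linear
isometric equivalence) to the closure of the range of `I − T T*` (the defect space);
in particular its Hilbert dimension equals the Parseval frame index of `T`. -/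
theorem span_of_parseval_generators_isometric_defect_space
    (H : Type*) [NormedAddCommGroup H] [InnerProductSpace ℂ H]
    [CompleteSpace H] [TopologicalSpace.SeparableSpace H]
    (T : H →L[ℂ] H) {I : Type*} (v : I → H)
    (hParseval : ∀ x : H, ∑' p : I × ℕ, ‖⟪x, (T ^ p.2) (v p.1)⟫‖ ^ 2 = ‖x‖ ^ 2) :
    Nonempty
      (((Submodule.span ℂ (Set.range v)).topologicalClosure) ≃ₗᵢ[ℂ]
        ((LinearMap.range (((1 - T * ContinuousLinearMap.adjoint T : H →L[ℂ] H) : H →ₗ[ℂ] H))).topologicalClosure)) := by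
  classical
  set A : H →L[ℂ] H := 1 - T * ContinuousLinearMap.adjoint T with hA_def
  set T' : H →L[ℂ] H := ContinuousLinearMap.adjoint T with hT'_def
  set f : H → I × ℕ → ℝ := fun x p => ‖⟪x, (T ^ p.2) (v p.1)⟫‖ ^ 2 with hf_def
  -- key identity : the sum over generators plus ‖T* x‖² equals ‖x‖²
  have hrw : ∀ x : H, ∀ p : I × ℕ, f x (p.1, p.2 + 1) = f (T' x) p := by
    intro x p
    have hpow : (T ^ (p.2 + 1)) (v p.1) = T ((T ^ p.2) (v p.1)) := by
      rw [pow_succ']; rfl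
    simp only [hf_def]
    rw [hpow, ← ContinuousLinearMap.adjoint_inner_left]
  have hsummable : ∀ x : H, x ≠ 0 → Summable (f x) := by
    intro x hx
    by_contra h
    have hP := hParseval x
    rw [tsum_eq_zero_of_not_summable h] at hP
    have : ‖x‖ = 0 := by nlinarith [norm_nonneg x]
    exact hx (norm_eq_zero.mp this)
  have keyId : ∀ x : H, (∑' i : I, ‖⟪x, v i⟫‖ ^ 2) + ‖T' x‖ ^ 2 = ‖x‖ ^ 2 := by
    intro x
    rcases eq_or_ne x 0 with rfl | hx
    · simp
    · have hs : Summable (f x) := hsummable x hx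
      have hφ : Summable fun p : I × ℕ => f x (p.1, p.2 + 1) := by
        have hinj : Function.Injective (fun p : I × ℕ => (p.1, p.2 + 1)) := by
          intro p q h
          dsimp at h
          rw [Prod.ext_iff] at h
          exact Prod.ext h.1 (by omega)
        exact hs.comp_injective hinj
      have hsum0 : Summable fun i : I => f x (i, 0) := by
        have hinj : Function.Injective (fun i : I => (i, (0 : ℕ))) := by
          intro a b h; exact (Prod.ext_iff.mp h).1
        exact hs.comp_injective hinj
      have hT : (∑' p : I × ℕ, f x (p.1, p.2 + 1)) = ‖T' x‖ ^ 2 := by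
        rw [tsum_congr (hrw x)]
        exact hParseval (T' x)
      have hzero : ∀ i : I, f x (i, 0) = ‖⟪x, v i⟫‖ ^ 2 := by
        intro i; simp [hf_def]
      have hcalc : ‖x‖ ^ 2 = (∑' i : I, ‖⟪x, v i⟫‖ ^ 2) + ‖T' x‖ ^ 2 := by
        calc ‖x‖ ^ 2 = ∑' p : I × ℕ, f x p := (hParseval x).symm
        _ = ∑' i : I, ∑' n : ℕ, f x (i, n) := hs.tsum_prod
        _ = ∑' i : I, (f x (i, 0) + ∑' n : ℕ, f x (i, n + 1)) :=
            tsum_congr fun i => (hs.prod_factor i).tsum_eq_zero_add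
        _ = (∑' i : I, f x (i, 0)) + ∑' i : I, ∑' n : ℕ, f x (i, n + 1) :=
            hsum0.tsum_add hφ.prod
        _ = (∑' i : I, f x (i, 0)) + ∑' p : I × ℕ, f x (p.1, p.2 + 1) := by
            rw [hφ.tsum_prod]
        _ = (∑' i : I, ‖⟪x, v i⟫‖ ^ 2) + ‖T' x‖ ^ 2 := by
            rw [hT, tsum_congr hzero]
      linarith
  -- real part of ⟪A y, y⟫
  have hre : ∀ y : H, RCLike.re ⟪A y, y⟫ = ‖y‖ ^ 2 - ‖T' y‖ ^ 2 := by
    intro y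
    have hAy : A y = y - T (T' y) := rfl
    have hTT : ⟪T (T' y), y⟫ = ⟪T' y, T' y⟫ := by
      rw [hT'_def, ContinuousLinearMap.adjoint_inner_right]
    rw [hAy, inner_sub_left, hTT, map_sub]
    have h1 : RCLike.re ⟪y, y⟫ = ‖y‖ ^ 2 := inner_self_eq_norm_sq y
    have h2 : RCLike.re ⟪T' y, T' y⟫ = ‖T' y‖ ^ 2 := inner_self_eq_norm_sq (T' y)
    rw [h1, h2]
  -- positivity of A
  have hposA : A.IsPositive := by
    rw [ContinuousLinearMap.isPositive_def']
    constructor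
    · rw [hA_def, hT'_def]
      simp only [← ContinuousLinearMap.star_eq_adjoint]
      exact (IsSelfAdjoint.one (H →L[ℂ] H)).sub
        (IsSelfAdjoint.mul_star_self T)
    · intro y
      have := keyId y
      have hnn : 0 ≤ ∑' i : I, ‖⟪y, v i⟫‖ ^ 2 := tsum_nonneg fun i => sq_nonneg _
      have : ‖y‖ ^ 2 - ‖T' y‖ ^ 2 ≥ 0 := by linarith
      rw [ContinuousLinearMap.reApplyInnerSelf_apply, hre y]
      linarith
  have hself : ContinuousLinearMap.adjoint A = A :=
    ContinuousLinearMap.isSelfAdjoint_iff'.mp hposA.isSelfAdjoint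
  -- the central equivalence
  have horth : ∀ x : H, (∀ i : I, ⟪v i, x⟫ = 0) ↔ A x = 0 := by
    intro x
    constructor
    · intro h
      rcases eq_or_ne x 0 with rfl | hx
      · exact map_zero A
      · have hz : ∀ i : I, ‖⟪x, v i⟫‖ ^ 2 = 0 := by
          intro i
          have : ⟪x, v i⟫ = 0 := by
            rw [← inner_conj_symm, h i, map_zero]
          rw [this]; simp
        have hsum : (∑' i : I, ‖⟪x, v i⟫‖ ^ 2) = 0 := by
          rw [tsum_congr hz]; exact tsum_zero
        have h0 : RCLike.re ⟪A x, x⟫ = 0 := by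
          rw [hre x]
          have := keyId x
          linarith
        exact aux_isPositive_apply_eq_zero hposA h0
    · intro hAx i
      rcases eq_or_ne x 0 with rfl | hx
      · exact inner_zero_right _
      · have h0 : RCLike.re ⟪A x, x⟫ = 0 := by rw [hAx]; simp
        have hsum : (∑' i : I, ‖⟪x, v i⟫‖ ^ 2) = 0 := by
          have := hre x
          have := keyId x
          linarith [h0 ▸ hre x]
        have hsum0 : Summable fun i : I => ‖⟪x, v i⟫‖ ^ 2 := by
          have hinj : Function.Injective (fun i : I => (i, (0 : ℕ))) := by
            intro a b h; exact (Prod.ext_iff.mp h).1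
          have := (hsummable x hx).comp_injective hinj
          simpa [hf_def, Function.comp_def] using this
        have hle : ‖⟪x, v i⟫‖ ^ 2 ≤ 0 := hsum ▸ hsum0.le_tsum i fun j _ => sq_nonneg _
        have : ⟪x, v i⟫ = 0 := by
          have : ‖⟪x, v i⟫‖ = 0 := by nlinarith [norm_nonneg ⟪x, v i⟫]
          exact norm_eq_zero.mp this
        rw [← inner_conj_symm, this, map_zero]
  -- equality of orthogonal complements
  have hOrthEq : (Submodule.span ℂ (Set.range v))ᗮ = (LinearMap.range (A : H →ₗ[ℂ] H))ᗮ := by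
    ext x
    simp only [Submodule.mem_orthogonal]
    constructor
    · intro h
      have h' : ∀ i : I, ⟪v i, x⟫ = 0 := fun i =>
        h _ (Submodule.subset_span (Set.mem_range_self i))
      have hAx : A x = 0 := (horth x).mp h'
      rintro u ⟨y, rfl⟩
      have : ⟪A y, x⟫ = ⟪y, A x⟫ := by
        conv_lhs => rw [← hself]
        exact ContinuousLinearMap.adjoint_inner_left A x y
      show ⟪A y, x⟫ = 0
      rw [this, hAx, inner_zero_right]
    · intro h
      have hAx : A x = 0 := by
        have hz : ∀ z : H, ⟪z, A x⟫ = 0 := by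
          intro z
          have h1 : ⟪A z, x⟫ = 0 := h _ ⟨z, rfl⟩
          have h2 : ⟪A z, x⟫ = ⟪z, A x⟫ := by
            conv_lhs => rw [← hself]
            exact ContinuousLinearMap.adjoint_inner_left A x z
          rw [← h2, h1]
        have := hz (A x)
        exact inner_self_eq_zero.mp this
      have h' := (horth x).mpr hAx
      intro u hu
      induction hu using Submodule.span_induction with
      | mem u hu => obtain ⟨i, rfl⟩ := hu; exact h' i
      | zero => exact inner_zero_left x
      | add u w _ _ hu hw => rw [inner_add_left, hu, hw, add_zero]
      | smul c u _ hu => rw [inner_smul_left, hu, mul_zero]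
  have hEq : (Submodule.span ℂ (Set.range v)).topologicalClosure
      = (LinearMap.range (A : H →ₗ[ℂ] H)).topologicalClosure := by
    rw [← Submodule.orthogonal_orthogonal_eq_closure,
      ← Submodule.orthogonal_orthogonal_eq_closure, hOrthEq]
  rw [hEq]
  exact ⟨LinearIsometryEquiv.refl ℂ _⟩
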